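/- If an invertible real n×n matrix A has no negative real eigenvalues, then A has a real square root which is a polynomial in A with real coefficients. -/

import Mathlib

open Matrix Polynomial

/-- CRT step: combine square roots of X mod coprime factors. -/
lemma crt_step (x y p1 p2 : Polynomial ℝ) (hc : IsCoprime x y)
    (h1 : x ∣ p1 * p1 - X) (h2 : y ∣ p2 * p2 - X) :
    ∃ p : Polynomial ℝ, x * y ∣ p * p - X := by
  obtain ⟨u, v, huv⟩ := hc
  refine ⟨p1 * v * y + p2 * u * x, (IsCoprime.mul_dvd ⟨u, v, huv⟩ ?_ ?_)⟩
  · have ha : p1 * v * y + p2 * u * x = x * (u * (p2 - p1)) + p1 := by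
      linear_combination p1 * huv
    obtain ⟨b, hb⟩ := h1
    refine ⟨b + 2 * p1 * (u * (p2 - p1)) + x * (u * (p2 - p1)) * (u * (p2 - p1)), ?_⟩
    rw [ha]
    linear_combination hb
  · have ha : p1 * v * y + p2 * u * x = y * (v * (p1 - p2)) + p2 := by
      linear_combination p2 * huv
    obtain ⟨b, hb⟩ := h2
    refine ⟨b + 2 * p2 * (v * (p1 - p2)) + y * (v * (p1 - p2)) * (v * (p1 - p2)), ?_⟩
    rw [ha]
    linear_combination hb

/-- Hensel lifting step for square roots of X mod prime powers. -/
lemma hensel_step (q : Polynomial ℝ) (hq : Prime q) (hqX : ¬ q ∣ X) (j : ℕ)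
    (p : Polynomial ℝ) (hp : q ^ (j + 1) ∣ p * p - X) :
    ∃ p' : Polynomial ℝ, q ^ (j + 2) ∣ p' * p' - X := by
  obtain ⟨g, hg⟩ := hp
  have hqp : ¬ q ∣ 2 * p := by
    intro hd
    have h2 : IsUnit (2 : Polynomial ℝ) := by
      have hC2 : (C (2 : ℝ)) = (2 : Polynomial ℝ) := map_ofNat C 2
      rw [← hC2]
      exact isUnit_C.2 (isUnit_iff_ne_zero.2 two_ne_zero)
    have hqp' : q ∣ p := by
      rcases hq.dvd_or_dvd hd with h | h
      · exact absurd (isUnit_of_dvd_unit h h2) hq.not_unit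
      · exact h
    apply hqX
    have h1 : q ∣ p * p := hqp'.mul_right p
    have h2' : q ∣ p * p - X := (dvd_pow_self q (Nat.succ_ne_zero j)).trans ⟨g, hg⟩
    simpa using dvd_sub h1 h2'
  obtain ⟨u, v, huv⟩ := (hq.irreducible.coprime_iff_not_dvd).2 hqp
  set Q : Polynomial ℝ := q ^ (j + 1) with hQ
  refine ⟨p - v * g * Q, ?_⟩
  have key : (p - v * g * Q) * (p - v * g * Q) - X
      = Q * q * (g * u) + Q * Q * (v * v * g * g) := by
    have hg' : p * p - X = Q * g := hg
    linear_combination hg' - Q * g * huv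
  rw [key]
  have hd1 : q ^ (j + 2) ∣ Q * q * (g * u) := by
    refine Dvd.dvd.mul_right ?_ _
    rw [hQ, ← pow_succ]
  have hd2 : q ^ (j + 2) ∣ Q * Q * (v * v * g * g) := by
    refine Dvd.dvd.mul_right ?_ _
    rw [hQ, ← pow_add]
    exact pow_dvd_pow q (by omega)
  exact dvd_add hd1 hd2

lemma quad_helper (p : Polynomial ℝ) (hp : p.natDegree ≤ 2) :
    p = C (p.coeff 2) * X ^ 2 + C (p.coeff 1) * X + C (p.coeff 0) := by
  have h3 : p.natDegree < 3 := by omega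
  have h := p.as_sum_range' 3 h3
  conv_lhs => rw [h]
  rw [Finset.sum_range_succ, Finset.sum_range_succ, Finset.sum_range_one]
  simp only [← C_mul_X_pow_eq_monomial]
  ring

/-- Base case: an irreducible real polynomial with no nonpositive-real complex roots
divides `p*p - X` for some real `p`. -/
lemma base_case (q : Polynomial ℝ) (hq : Irreducible q)
    (hroot : ∀ z : ℂ, (q.map (algebraMap ℝ ℂ)).IsRoot z → z.im ≠ 0 ∨ 0 < z.re) :
    ∃ p : Polynomial ℝ, q ∣ p * p - X := by
  by_cases hreal : ∃ r : ℝ, q.IsRoot r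
  · obtain ⟨r, hr⟩ := hreal
    have hrC : (q.map (algebraMap ℝ ℂ)).IsRoot (r : ℂ) := by
      have h1 : (q.map (algebraMap ℝ ℂ)).eval (algebraMap ℝ ℂ r)
          = algebraMap ℝ ℂ (q.eval r) := by
        rw [eval_map, eval₂_at_apply]
      simpa [IsRoot, hr.eq_zero] using h1
    have hrpos : 0 < r := by
      rcases hroot _ hrC with h | h
      · simp at h
      · simpa using h
    refine ⟨C (Real.sqrt r), ?_⟩
    have hdvd : (X - C r) ∣ q := dvd_iff_isRoot.2 hr
    have hassoc : Associated (X - C r) q :=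
      (irreducible_X_sub_C r).associated_of_dvd hq hdvd
    have hq1 : q ∣ X - C r := hassoc.symm.dvd
    have hq2 : q ∣ C r - X := by
      have := hq1.neg_right
      rwa [neg_sub] at this
    have heq : C (Real.sqrt r) * C (Real.sqrt r) - X = C r - X := by
      rw [← C_mul, Real.mul_self_sqrt hrpos.le]
    rw [heq]; exact hq2
  · -- no real root: q is an irreducible quadratic with negative discriminant
    push_neg at hreal
    have hd2 : q.natDegree ≤ 2 := hq.natDegree_le_two
    have hd1 : 1 ≤ q.natDegree := hq.natDegree_pos
    have hdne1 : q.natDegree ≠ 1 := by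
      intro h1
      have hdeg : q.degree ≤ 1 := by
        rw [degree_eq_natDegree hq.ne_zero, h1]
        norm_num
      have hc1 : q.coeff 1 ≠ 0 := by
        intro h
        have hlc : q.leadingCoeff = 0 := by rwa [leadingCoeff, h1]
        exact hq.ne_zero (leadingCoeff_eq_zero.1 hlc)
      have heq := eq_X_add_C_of_degree_le_one hdeg
      apply hreal (-(q.coeff 0) / q.coeff 1)
      rw [IsRoot]
      conv_lhs => arg 2; rw [heq]
      simp only [eval_add, eval_mul, eval_C, eval_X]
      field_simp
      ring
    have hdq : q.natDegree = 2 := by omega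
    have hc2 : q.coeff 2 ≠ 0 := by
      intro h
      have hlc : q.leadingCoeff = 0 := by rwa [leadingCoeff, hdq]
      exact hq.ne_zero (leadingCoeff_eq_zero.1 hlc)
    have hqeq' : q = C (q.coeff 2) * (X ^ 2 + C (q.coeff 1 / q.coeff 2) * X
        + C (q.coeff 0 / q.coeff 2)) := by
      conv_lhs => rw [quad_helper q hd2]
      have e1 : C (q.coeff 2) * C (q.coeff 1 / q.coeff 2) = C (q.coeff 1) := by
        rw [← C_mul]; congr 1; field_simp
      have e2 : C (q.coeff 2) * C (q.coeff 0 / q.coeff 2) = C (q.coeff 0) := by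
        rw [← C_mul]; congr 1; field_simp
      linear_combination (-(X : Polynomial ℝ)) * e1 - e2
    set a := q.coeff 2 with ha
    set b : ℝ := q.coeff 1 / a with hbdef
    set c : ℝ := q.coeff 0 / a with hcdef
    have hqeq : q = C a * (X ^ 2 + C b * X + C c) := hqeq'

    have hnr : ∀ x : ℝ, x ^ 2 + b * x + c ≠ 0 := by
      intro x hx
      apply hreal x
      rw [IsRoot, hqeq]
      simp only [eval_mul, eval_add, eval_pow, eval_C, eval_X]
      rw [show x ^ 2 + b * x + c = 0 from hx, mul_zero]
    have hdisc : b ^ 2 - 4 * c < 0 := by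
      by_contra h
      push_neg at h
      have hs2 : Real.sqrt (b ^ 2 - 4 * c) ^ 2 = b ^ 2 - 4 * c := Real.sq_sqrt h
      apply hnr ((-b + Real.sqrt (b ^ 2 - 4 * c)) / 2)
      nlinarith [hs2]
    have hcpos : 0 < c := by nlinarith [sq_nonneg b]
    set s := Real.sqrt c with hsdef
    have hs2 : s * s = c := Real.mul_self_sqrt hcpos.le
    have hspos : 0 < s := Real.sqrt_pos.2 hcpos
    set D : ℝ := 4 * c - b ^ 2 with hD
    have hDpos : 0 < D := by linarith
    have hnum : 0 < b + 2 * s := by nlinarith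
    set u : ℝ := (b + 2 * s) / D with hu
    have hupos : 0 < u := div_pos hnum hDpos
    have huD : u * D = b + 2 * s := by
      rw [hu]; field_simp
    have key : u * (u * D) = 2 * u * b + 1 := by
      have hexp : u * D * (u * D) = (2 * u * b + 1) * D := by
        rw [huD]
        have : (b + 2 * s) * (b + 2 * s) = 2 * b * (b + 2 * s) + D := by
          rw [hD]; linear_combination 4 * hs2
        rw [this, ← huD]; ring
      have hcancel : (u * (u * D)) * D = (2 * u * b + 1) * D := by
        linear_combination hexp
      exact mul_right_cancel₀ (ne_of_gt hDpos) hcancel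
    set α := Real.sqrt u with hα
    have hα2 : α * α = u := Real.mul_self_sqrt hupos.le
    have hαpos : 0 < α := Real.sqrt_pos.2 hupos
    set β : ℝ := (1 + u * b) / (2 * α) with hβ
    have fact1 : 2 * α * β = 1 + u * b := by
      rw [hβ]; field_simp
    have fact2 : β * β = u * c := by
      have h1 : (1 + u * b) * (1 + u * b) = 4 * u * (u * c) := by
        linear_combination (-1 : ℝ) * key + u * u * hD
      have h4 : 2 * α * (2 * α) = 4 * u := by linear_combination 4 * hα2
      rw [hβ, div_mul_div_comm, h1, h4]
      have h4u : (4 : ℝ) * u ≠ 0 := by positivity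
      field_simp
    refine ⟨C α * X + C β, ?_⟩
    have hiden : (C α * X + C β) * (C α * X + C β) - X
        = C u * (X ^ 2 + C b * X + C c) := by
      have e0 : (C (α * α) : Polynomial ℝ) = C u := by rw [hα2]
      have e1 : (C (2 * α * β) : Polynomial ℝ) = C (1 + u * b) := by rw [fact1]
      have e2 : (C (β * β) : Polynomial ℝ) = C (u * c) := by rw [fact2]
      simp only [C_mul, C_add, C_1] at e0 e1 e2
      have e3 : (C (2 : ℝ)) = (2 : Polynomial ℝ) := map_ofNat C 2
      rw [e3] at e1
      linear_combination (X ^ 2 : Polynomial ℝ) * e0 + (X : Polynomial ℝ) * e1 + e2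
    rw [hiden, hqeq]
    refine ⟨C (u / a), ?_⟩
    rw [mul_comm (C a), mul_assoc, ← C_mul]
    rw [show a * (u / a) = u from by field_simp]
    ring

/-- Key polynomial lemma. -/
lemma sqrt_poly (M : Polynomial ℝ)
    (h : ∀ z : ℂ, (M.map (algebraMap ℝ ℂ)).IsRoot z → z.im ≠ 0 ∨ 0 < z.re) :
    ∃ p : Polynomial ℝ, M ∣ p * p - X := by
  induction M using UniqueFactorizationMonoid.induction_on_coprime with
  | h0 =>
    exfalso
    have : (Polynomial.map (algebraMap ℝ ℂ) (0 : Polynomial ℝ)).IsRoot 0 := by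
      simp [IsRoot]
    rcases h 0 this with h' | h' <;> simp at h'
  | h1 hx => exact ⟨0, hx.dvd⟩
  | hpr i hq =>
    rename_i q
    rcases Nat.eq_zero_or_pos i with hi | hi
    · subst hi; exact ⟨0, by simpa using one_dvd _⟩
    · -- roots of q are roots of q^i
      have hqdvd : q ∣ q ^ i := dvd_pow_self q (Nat.pos_iff_ne_zero.1 hi)
      have hrootq : ∀ z : ℂ, (q.map (algebraMap ℝ ℂ)).IsRoot z → z.im ≠ 0 ∨ 0 < z.re := by
        intro z hz
        exact h z (hz.dvd (Polynomial.map_dvd _ hqdvd))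
      have hqX : ¬ q ∣ X := by
        intro hd
        have hXq : X ∣ q := (hq.irreducible.associated_of_dvd irreducible_X hd).symm.dvd
        have h0 : q.IsRoot 0 := by
          have h1 : X - C (0 : ℝ) ∣ q := by simpa using hXq
          exact dvd_iff_isRoot.1 h1
        have h0C : (q.map (algebraMap ℝ ℂ)).IsRoot ((0 : ℝ) : ℂ) := by
          have h1 : (q.map (algebraMap ℝ ℂ)).eval (algebraMap ℝ ℂ 0)
              = algebraMap ℝ ℂ (q.eval 0) := by rw [eval_map, eval₂_at_apply]
          simpa [IsRoot, h0.eq_zero] using h1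
        rcases hrootq _ (by simpa using h0C) with h' | h' <;> simp at h'
      obtain ⟨p0, hp0⟩ := base_case q hq.irreducible hrootq
      -- lift to q^i by induction
      have hlift : ∀ j : ℕ, ∃ p : Polynomial ℝ, q ^ (j + 1) ∣ p * p - X := by
        intro j
        induction j with
        | zero => exact ⟨p0, by simpa using hp0⟩
        | succ k ih =>
          obtain ⟨p, hp⟩ := ih
          exact hensel_step q hq hqX k p hp
      obtain ⟨p, hp⟩ := hlift (i - 1)
      refine ⟨p, dvd_trans (pow_dvd_pow q (by omega)) hp⟩
  | hcp hrel hx hy =>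
    rename_i x y
    have hx' := hx (fun z hz => h z (hz.dvd (Polynomial.map_dvd _ (dvd_mul_right x y))))
    have hy' := hy (fun z hz => h z (hz.dvd (Polynomial.map_dvd _ (dvd_mul_left y x))))
    obtain ⟨p1, hp1⟩ := hx'
    obtain ⟨p2, hp2⟩ := hy'
    exact crt_step x y p1 p2 hrel.isCoprime hp1 hp2

theorem stmt_10 (n : ℕ) (A : Matrix (Fin n) (Fin n) ℝ) (hA : IsUnit A.det)
    (hneg : ∀ r : ℝ, r < 0 →
      ¬ ((A.map (algebraMap ℝ ℂ)).charpoly.IsRoot (r : ℂ))) :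
    ∃ p : Polynomial ℝ, (aeval A p) * (aeval A p) = A := by
  have hmap : (A.map (algebraMap ℝ ℂ)).charpoly
      = A.charpoly.map (algebraMap ℝ ℂ) := Matrix.charpoly_map A _
  have hdet : (A.map (algebraMap ℝ ℂ)).det ≠ 0 := by
    have hd := (algebraMap ℝ ℂ).map_det A
    rw [RingHom.mapMatrix_apply] at hd
    intro h0
    have h1 : algebraMap ℝ ℂ A.det = 0 := hd.trans h0
    have h2 : A.det = 0 := by
      rwa [show (algebraMap ℝ ℂ) A.det = ((A.det : ℝ) : ℂ) from rfl,
        Complex.ofReal_eq_zero] at h1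
    rw [h2] at hA
    simpa using hA
  have hcoeff : (A.map (algebraMap ℝ ℂ)).charpoly.coeff 0 ≠ 0 := by
    intro h0
    apply hdet
    rw [Matrix.det_eq_sign_charpoly_coeff, h0, mul_zero]
  have hcond : ∀ z : ℂ, (A.charpoly.map (algebraMap ℝ ℂ)).IsRoot z → z.im ≠ 0 ∨ 0 < z.re := by
    intro z hz
    by_contra hcon
    push_neg at hcon
    obtain ⟨him, hre⟩ := hcon
    have hzr : z = ((z.re : ℝ) : ℂ) := Complex.ext rfl (by simpa using him)
    rcases lt_or_eq_of_le hre with hlt | heq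
    · exact hneg z.re hlt (by rw [hmap]; rwa [hzr] at hz)
    · apply hcoeff
      rw [coeff_zero_eq_eval_zero, hmap]
      have hz0 : z = 0 := by rw [hzr, heq]; simp
      have hzz := hz
      rw [hz0] at hzz
      exact hzz
  obtain ⟨p, hp⟩ := sqrt_poly A.charpoly hcond
  obtain ⟨c, hc⟩ := hp
  refine ⟨p, ?_⟩
  have h0 : aeval A (p * p - X) = aeval A (A.charpoly * c) := by rw [hc]
  rw [_root_.map_sub, _root_.map_mul, aeval_X, _root_.map_mul,
    Matrix.aeval_self_charpoly, zero_mul] at h0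
  have := sub_eq_zero.1 h0
  exact this
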